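/- For every cycle C_n with n ≥ 3, EC(C_n) ≤ 6. -/

import Mathlib

open SimpleGraph

/-- Two edges (as unordered pairs of vertices) share an endpoint. -/
def SharesEndpoint {V : Type*} (e f : Sym2 V) : Prop := ∃ v, v ∈ e ∧ v ∈ f

/-- `D` is an edge dominating set of `G`: `D` consists of edges of `G` and every
edge of `G` outside `D` shares an endpoint with some edge of `D`. -/
def IsEdgeDominating {V : Type*} (G : SimpleGraph V) (D : Set (Sym2 V)) : Prop :=
  D ⊆ G.edgeSet ∧ ∀ e ∈ G.edgeSet \ D, ∃ f ∈ D, SharesEndpoint e f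

/-- Two disjoint edge sets form an edge coalition: neither is an edge dominating
set but their union is. -/
def IsEdgeCoalition {V : Type*} (G : SimpleGraph V) (E₁ E₂ : Set (Sym2 V)) : Prop :=
  Disjoint E₁ E₂ ∧ ¬ IsEdgeDominating G E₁ ∧ ¬ IsEdgeDominating G E₂ ∧
    IsEdgeDominating G (E₁ ∪ E₂)

/-- An ec-partition of `G`: a partition of the edge set of `G` (into nonempty,
pairwise disjoint parts) such that every part either is a singleton edge
dominating set, or is not an edge dominating set but forms an edge coalition
with another part. -/
def IsECPartition {V : Type*} (G : SimpleGraph V) (P : Set (Set (Sym2 V))) : Prop :=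
  (∀ A ∈ P, A.Nonempty) ∧
  P.Pairwise Disjoint ∧
  ⋃₀ P = G.edgeSet ∧
  ∀ A ∈ P, ((∃ e, A = {e}) ∧ IsEdgeDominating G A) ∨
    (¬ IsEdgeDominating G A ∧ ∃ B ∈ P, B ≠ A ∧ IsEdgeCoalition G A B)

/-- The edge coalition number `EC(G)`: the maximum number of parts over all
ec-partitions of `G`. -/
noncomputable def edgeCoalitionNumber {V : Type*} (G : SimpleGraph V) : ℕ :=
  sSup {k | ∃ P, IsECPartition G P ∧ P.ncard = k}


namespace ECAux

open Set

variable {α : Type*}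

/-- Abstract domination: `D` meets the "window" of every point of `E`. -/
def ADom (E : Set α) (W : α → Set α) (D : Set α) : Prop := ∀ f ∈ E, (D ∩ W f).Nonempty

variable {E : Set α} {W : α → Set α} {P : Set (Set α)}

lemma four_hit (hWfin : ∀ f ∈ E, (W f).Finite) (hW3 : ∀ f ∈ E, (W f).ncard ≤ 3)
    {f : α} (hf : f ∈ E) {S1 S2 S3 S4 : Set α}
    (h12 : Disjoint S1 S2) (h13 : Disjoint S1 S3) (h14 : Disjoint S1 S4)
    (h23 : Disjoint S2 S3) (h24 : Disjoint S2 S4) (h34 : Disjoint S3 S4)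
    (h1 : (S1 ∩ W f).Nonempty) (h2 : (S2 ∩ W f).Nonempty)
    (h3 : (S3 ∩ W f).Nonempty) (h4 : (S4 ∩ W f).Nonempty) : False := by
  obtain ⟨a1, ha1, hw1⟩ := h1
  obtain ⟨a2, ha2, hw2⟩ := h2
  obtain ⟨a3, ha3, hw3⟩ := h3
  obtain ⟨a4, ha4, hw4⟩ := h4
  have d12 : a1 ≠ a2 := fun h => disjoint_left.mp h12 ha1 (h ▸ ha2)
  have d13 : a1 ≠ a3 := fun h => disjoint_left.mp h13 ha1 (h ▸ ha3)
  have d14 : a1 ≠ a4 := fun h => disjoint_left.mp h14 ha1 (h ▸ ha4)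
  have d23 : a2 ≠ a3 := fun h => disjoint_left.mp h23 ha2 (h ▸ ha3)
  have d24 : a2 ≠ a4 := fun h => disjoint_left.mp h24 ha2 (h ▸ ha4)
  have d34 : a3 ≠ a4 := fun h => disjoint_left.mp h34 ha3 (h ▸ ha4)
  have hsub : ({a1, a2, a3, a4} : Set α) ⊆ W f := by
    rintro x (rfl | rfl | rfl | rfl) <;> assumption
  have hcard : ({a1, a2, a3, a4} : Set α).ncard = 4 := by
    rw [ncard_insert_of_notMem (by simp [d12, d13, d14])
        ((finite_singleton a4).insert a3 |>.insert a2),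
      ncard_insert_of_notMem (by simp [d23, d24]) ((finite_singleton a4).insert a3),
      ncard_pair d34]
  have hle := ncard_le_ncard hsub (hWfin f hf)
  have := hW3 f hf
  omega

lemma card_le_of_partition (hne : ∀ A ∈ P, A.Nonempty) (hdisj : P.Pairwise Disjoint)
    (hcup : ⋃₀ P = E) (hEfin : E.Finite) : P.ncard ≤ E.ncard := by
  classical
  rcases P.eq_empty_or_nonempty with rfl | ⟨A0, hA0⟩
  · simp
  obtain ⟨a0, _⟩ := hne A0 hA0
  set φ : Set α → α := fun A => if h : A.Nonempty then h.some else a0 with hφ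
  have hmem : ∀ A ∈ P, φ A ∈ A := by
    intro A hA
    have h := hne A hA
    simp only [hφ, dif_pos h]
    exact h.some_mem
  refine ncard_le_ncard_of_injOn φ ?_ ?_ hEfin
  · intro A hA
    have : φ A ∈ ⋃₀ P := ⟨A, hA, hmem A hA⟩
    rwa [hcup] at this
  · intro A hA B hB hEq
    by_contra hne'
    exact disjoint_left.mp (hdisj hA hB hne') (hmem A hA) (hEq ▸ hmem B hB)

lemma three_pairs (hne : ∀ A ∈ P, A.Nonempty) (hdisj : P.Pairwise Disjoint)
    (hcup : ⋃₀ P = E)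
    (hWfin : ∀ f ∈ E, (W f).Finite) (hW3 : ∀ f ∈ E, (W f).ncard ≤ 3)
    (hWself : ∀ f ∈ E, f ∈ W f) (h7 : 7 ≤ P.ncard)
    {P1 P2 P3 P4 P5 P6 : Set α}
    (hP1 : P1 ∈ P) (hP2 : P2 ∈ P) (hP3 : P3 ∈ P) (hP4 : P4 ∈ P) (hP5 : P5 ∈ P) (hP6 : P6 ∈ P)
    (d12 : P1 ≠ P2) (d13 : P1 ≠ P3) (d14 : P1 ≠ P4) (d15 : P1 ≠ P5) (d16 : P1 ≠ P6)
    (d23 : P2 ≠ P3) (d24 : P2 ≠ P4) (d25 : P2 ≠ P5) (d26 : P2 ≠ P6)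
    (d34 : P3 ≠ P4) (d35 : P3 ≠ P5) (d36 : P3 ≠ P6)
    (d45 : P4 ≠ P5) (d46 : P4 ≠ P6) (d56 : P5 ≠ P6)
    (dom12 : ADom E W (P1 ∪ P2)) (dom34 : ADom E W (P3 ∪ P4)) (dom56 : ADom E W (P5 ∪ P6)) :
    False := by
  have pd : ∀ {A B : Set α}, A ∈ P → B ∈ P → A ≠ B → Disjoint A B :=
    fun hA hB hAB => hdisj hA hB hAB
  have hnotsub : ¬ P ⊆ {P1, P2, P3, P4, P5, P6} := by
    intro hsub
    have hfin : ({P1, P2, P3, P4, P5, P6} : Set (Set α)).Finite := by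
      apply Set.Finite.insert; apply Set.Finite.insert; apply Set.Finite.insert
      apply Set.Finite.insert; apply Set.Finite.insert; exact finite_singleton _
    have h1 := ncard_le_ncard hsub hfin
    have h2 : ({P1, P2, P3, P4, P5, P6} : Set (Set α)).ncard ≤ 6 := by
      refine le_trans (ncard_insert_le _ _) ?_
      refine le_trans (Nat.add_le_add_right (ncard_insert_le _ _) 1) ?_
      refine le_trans (Nat.add_le_add_right (Nat.add_le_add_right (ncard_insert_le _ _) 1) 1) ?_
      refine le_trans (Nat.add_le_add_right (Nat.add_le_add_right
        (Nat.add_le_add_right (ncard_insert_le _ _) 1) 1) 1) ?_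
      have := ncard_insert_le P5 ({P6} : Set (Set α))
      have := ncard_singleton (P6 : Set α)
      omega
    omega
  obtain ⟨X, hX, hXS⟩ := not_subset.mp hnotsub
  simp only [mem_insert_iff, mem_singleton_iff, not_or] at hXS
  obtain ⟨nX1, nX2, nX3, nX4, nX5, nX6⟩ := hXS
  obtain ⟨x, hx⟩ := hne X hX
  have hxE : x ∈ E := by
    have : x ∈ ⋃₀ P := ⟨X, hX, hx⟩
    rwa [hcup] at this
  have hxnot : ∀ {Q : Set α}, Q ∈ P → X ≠ Q → x ∉ Q :=
    fun hQ hXQ => disjoint_left.mp (pd hX hQ hXQ) hx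
  refine four_hit hWfin hW3 hxE (S1 := P1 ∪ P2) (S2 := P3 ∪ P4) (S3 := P5 ∪ P6) (S4 := {x})
    ?_ ?_ ?_ ?_ ?_ ?_ (dom12 x hxE) (dom34 x hxE) (dom56 x hxE) ⟨x, rfl, hWself x hxE⟩
  · exact disjoint_union_left.mpr ⟨disjoint_union_right.mpr ⟨pd hP1 hP3 d13, pd hP1 hP4 d14⟩,
      disjoint_union_right.mpr ⟨pd hP2 hP3 d23, pd hP2 hP4 d24⟩⟩
  · exact disjoint_union_left.mpr ⟨disjoint_union_right.mpr ⟨pd hP1 hP5 d15, pd hP1 hP6 d16⟩,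
      disjoint_union_right.mpr ⟨pd hP2 hP5 d25, pd hP2 hP6 d26⟩⟩
  · refine disjoint_singleton_right.mpr ?_
    rintro (h | h)
    exacts [hxnot hP1 nX1 h, hxnot hP2 nX2 h]
  · exact disjoint_union_left.mpr ⟨disjoint_union_right.mpr ⟨pd hP3 hP5 d35, pd hP3 hP6 d36⟩,
      disjoint_union_right.mpr ⟨pd hP4 hP5 d45, pd hP4 hP6 d46⟩⟩
  · refine disjoint_singleton_right.mpr ?_
    rintro (h | h)
    exacts [hxnot hP3 nX3 h, hxnot hP4 nX4 h]
  · refine disjoint_singleton_right.mpr ?_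
    rintro (h | h)
    exacts [hxnot hP5 nX5 h, hxnot hP6 nX6 h]

lemma rep_hub (hWfin : ∀ f ∈ E, (W f).Finite) (hW3 : ∀ f ∈ E, (W f).ncard ≤ 3)
    {Z Z' U V Xi Xj : Set α}
    (dZXi : Disjoint Z' Xi) (dZXj : Disjoint Z' Xj) (dXiXj : Disjoint Xi Xj)
    (dUZ' : Disjoint U Z') (dUXi : Disjoint U Xi) (dUXj : Disjoint U Xj)
    (dVZ' : Disjoint V Z') (dVXi : Disjoint V Xi) (dVXj : Disjoint V Xj)
    (hnd : ¬ ADom E W Z) (dom1 : ADom E W (Z ∪ Z')) (dom2 : ADom E W (Z ∪ Xi))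
    (dom3 : ADom E W (Z ∪ Xj)) (dom4 : ADom E W (U ∪ V)) : False := by
  unfold ADom at hnd
  push_neg at hnd
  obtain ⟨f, hfE, hfA⟩ := hnd
  have get : ∀ {T : Set α}, ADom E W (Z ∪ T) → (T ∩ W f).Nonempty := by
    intro T hdom
    obtain ⟨u, hu, huW⟩ := hdom f hfE
    rcases hu with hu | hu
    · exact absurd (show u ∈ Z ∩ W f from ⟨hu, huW⟩) (by rw [hfA]; exact notMem_empty u)
    · exact ⟨u, hu, huW⟩
  exact four_hit hWfin hW3 hfE (S1 := Z') (S2 := Xi) (S3 := Xj) (S4 := U ∪ V)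
    dZXi dZXj (disjoint_union_right.mpr ⟨dUZ'.symm, dVZ'.symm⟩)
    dXiXj (disjoint_union_right.mpr ⟨dUXi.symm, dVXi.symm⟩)
    (disjoint_union_right.mpr ⟨dUXj.symm, dVXj.symm⟩)
    (get dom1) (get dom2) (get dom3) (dom4 f hfE)

lemma partners_card (hdisj : P.Pairwise Disjoint)
    (hWfin : ∀ f ∈ E, (W f).Finite) (hW3 : ∀ f ∈ E, (W f).ncard ≤ 3)
    {A : Set α} (hnd : ¬ ADom E W A) :
    {B | B ∈ P ∧ B ≠ A ∧ ADom E W (A ∪ B)}.ncard ≤ 3 := by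
  classical
  unfold ADom at hnd
  push_neg at hnd
  obtain ⟨f, hfE, hfA⟩ := hnd
  have key : ∀ B ∈ {B | B ∈ P ∧ B ≠ A ∧ ADom E W (A ∪ B)}, (B ∩ W f).Nonempty := by
    rintro B ⟨hBP, hBA, hdom⟩
    obtain ⟨u, hu, huW⟩ := hdom f hfE
    rcases hu with hu | hu
    · exact absurd (show u ∈ A ∩ W f from ⟨hu, huW⟩) (by rw [hfA]; exact notMem_empty u)
    · exact ⟨u, hu, huW⟩
  set φ : Set α → α := fun B => if h : (B ∩ W f).Nonempty then h.some else f with hφ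
  have hmem : ∀ B ∈ {B | B ∈ P ∧ B ≠ A ∧ ADom E W (A ∪ B)}, φ B ∈ B ∩ W f := by
    intro B hB
    have h := key B hB
    simp only [hφ, dif_pos h]
    exact h.some_mem
  refine le_trans (ncard_le_ncard_of_injOn φ (fun B hB => (hmem B hB).2) ?_ (hWfin f hfE))
    (hW3 f hfE)
  intro B hB B' hB' hEq
  by_contra hne'
  exact disjoint_left.mp (hdisj hB.1 hB'.1 hne') (hmem B hB).1 (hEq ▸ (hmem B' hB').1)


set_option maxHeartbeats 1000000 in
theorem abstract_main (hWfin : ∀ f ∈ E, (W f).Finite) (hW3 : ∀ f ∈ E, (W f).ncard ≤ 3)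
    (hWself : ∀ f ∈ E, f ∈ W f) (hWsym : ∀ f ∈ E, ∀ g ∈ E, f ∈ W g → g ∈ W f)
    (hne : ∀ A ∈ P, A.Nonempty) (hdisj : P.Pairwise Disjoint) (hcup : ⋃₀ P = E)
    (hEfin : E.Finite) (hE7 : 7 ≤ E.ncard)
    (hpart : ∀ A ∈ P, ((∃ e, A = {e}) ∧ ADom E W A) ∨
      (¬ ADom E W A ∧ ∃ B ∈ P, B ≠ A ∧ ADom E W (A ∪ B))) :
    P.ncard ≤ 6 := by
  by_contra hlt
  push_neg at hlt
  have h7 : 7 ≤ P.ncard := hlt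
  have hPfin : P.Finite := finite_of_ncard_pos (by omega)
  have pd : ∀ {A B : Set α}, A ∈ P → B ∈ P → A ≠ B → Disjoint A B :=
    fun hA hB hAB => hdisj hA hB hAB
  have hsubE : ∀ {A : Set α}, A ∈ P → A ⊆ E := by
    intro A hA x hx
    have : x ∈ ⋃₀ P := ⟨A, hA, hx⟩
    rwa [hcup] at this
  -- no part is dominating
  have hnonD : ∀ A ∈ P, ¬ ADom E W A := by
    intro A hA
    rcases hpart A hA with ⟨⟨e, rfl⟩, hdom⟩ | ⟨h, _⟩
    · exfalso
      have heE : e ∈ E := hsubE hA rfl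
      have hsubW : E ⊆ W e := by
        intro g hg
        obtain ⟨u, hu, huW⟩ := hdom g hg
        rcases hu with rfl
        exact hWsym u heE g hg huW
      have h1 := ncard_le_ncard hsubW (hWfin e heE)
      have h2 := hW3 e heE
      omega
    · exact h
  have hpart' : ∀ A ∈ P, ∃ B ∈ P, B ≠ A ∧ ADom E W (A ∪ B) := by
    intro A hA
    rcases hpart A hA with ⟨_, hdom⟩ | ⟨_, h⟩
    · exact absurd hdom (hnonD A hA)
    · exact h
  obtain ⟨A, hA⟩ : P.Nonempty := nonempty_of_ncard_ne_zero (by omega)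
  obtain ⟨B, hB, hBA, domAB⟩ := hpart' A hA
  by_cases hex2 : ∃ C ∈ P, ∃ D ∈ P, C ≠ D ∧ C ≠ A ∧ C ≠ B ∧ D ≠ A ∧ D ≠ B ∧ ADom E W (C ∪ D)
  · obtain ⟨C, hC, D, hD, dCD, dCA, dCB, dDA, dDB, domCD⟩ := hex2
    have dAB : A ≠ B := fun h => hBA h.symm
    have domBA : ADom E W (B ∪ A) := by rwa [union_comm] at domAB
    have domDC : ADom E W (D ∪ C) := by rwa [union_comm] at domCD
    -- the set of parts outside the two coalition pairs
    have hOfin : (P \ {A, B, C, D}).Finite := hPfin.subset diff_subset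
    have hOcard : 3 ≤ (P \ {A, B, C, D}).ncard := by
      have h1 := ncard_le_ncard_diff_add_ncard P {A, B, C, D}
        (((finite_singleton D).insert C).insert B |>.insert A)
      have h2 : ({A, B, C, D} : Set (Set α)).ncard ≤ 4 := by
        refine le_trans (ncard_insert_le _ _) ?_
        refine le_trans (Nat.add_le_add_right (ncard_insert_le _ _) 1) ?_
        have := ncard_insert_le C ({D} : Set (Set α))
        have := ncard_singleton (D : Set α)
        omega
      omega
    obtain ⟨X1, hX1O⟩ : (P \ {A, B, C, D}).Nonempty := nonempty_of_ncard_ne_zero (by omega)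
    have h2c : 2 ≤ ((P \ {A, B, C, D}) \ {X1}).ncard := by
      rw [ncard_diff_singleton_of_mem hX1O]; omega
    obtain ⟨X2, hX2d⟩ : ((P \ {A, B, C, D}) \ {X1}).Nonempty :=
      nonempty_of_ncard_ne_zero (by omega)
    have hX2O := hX2d.1
    have n12 : X1 ≠ X2 := fun h => hX2d.2 h.symm
    have h3c : 1 ≤ (((P \ {A, B, C, D}) \ {X1}) \ {X2}).ncard := by
      rw [ncard_diff_singleton_of_mem hX2d]; omega
    obtain ⟨X3, hX3d⟩ : (((P \ {A, B, C, D}) \ {X1}) \ {X2}).Nonempty :=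
      nonempty_of_ncard_ne_zero (by omega)
    have hX3O := hX3d.1.1
    have n13 : X1 ≠ X3 := fun h => hX3d.1.2 h.symm
    have n23 : X2 ≠ X3 := fun h => hX3d.2 h.symm
    -- unpack O membership
    have hOmem : ∀ {X : Set α}, X ∈ P \ {A, B, C, D} →
        X ∈ P ∧ X ≠ A ∧ X ≠ B ∧ X ≠ C ∧ X ≠ D := by
      intro X hX
      have h2 := hX.2
      simp only [mem_insert_iff, mem_singleton_iff, not_or] at h2
      exact ⟨hX.1, h2.1, h2.2.1, h2.2.2.1, h2.2.2.2⟩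
    -- every outside part has a partner among A, B, C, D
    have hY : ∀ X ∈ P \ {A, B, C, D}, ∃ Y, (Y = A ∨ Y = B ∨ Y = C ∨ Y = D) ∧
        ADom E W (X ∪ Y) := by
      intro X hXO
      obtain ⟨hXP, nXA, nXB, nXC, nXD⟩ := hOmem hXO
      obtain ⟨Y, hYP, hYX, hdom⟩ := hpart' X hXP
      by_cases h4 : Y = A ∨ Y = B ∨ Y = C ∨ Y = D
      · exact ⟨Y, h4, hdom⟩
      · exfalso
        push_neg at h4
        obtain ⟨nYA, nYB, nYC, nYD⟩ := h4
        exact three_pairs hne hdisj hcup hWfin hW3 hWself h7 hA hB hC hD hXP hYP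
          dAB (fun h => dCA h.symm) (fun h => dDA h.symm) (fun h => nXA h.symm)
          (fun h => nYA h.symm) (fun h => dCB h.symm) (fun h => dDB h.symm)
          (fun h => nXB h.symm) (fun h => nYB h.symm) dCD (fun h => nXC h.symm)
          (fun h => nYC h.symm) (fun h => nXD h.symm) (fun h => nYD h.symm)
          (fun h => hYX h.symm) domAB domCD hdom
    -- repeated hub is impossible
    have L1' : ∀ Xi Xj Y, Xi ∈ P \ {A, B, C, D} → Xj ∈ P \ {A, B, C, D} → Xi ≠ Xj →
        ADom E W (Xi ∪ Y) → ADom E W (Xj ∪ Y) → (Y = A ∨ Y = B ∨ Y = C ∨ Y = D) → False := by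
      intro Xi Xj Y hXiO hXjO hij di dj hYc
      obtain ⟨hXiP, niA, niB, niC, niD⟩ := hOmem hXiO
      obtain ⟨hXjP, njA, njB, njC, njD⟩ := hOmem hXjO
      rw [union_comm] at di dj
      rcases hYc with h | h | h | h <;> rw [h] at di dj
      · exact rep_hub hWfin hW3 (pd hB hXiP (fun h => niB h.symm))
          (pd hB hXjP (fun h => njB h.symm)) (pd hXiP hXjP hij)
          (pd hC hB dCB) (pd hC hXiP (fun h => niC h.symm)) (pd hC hXjP (fun h => njC h.symm))
          (pd hD hB dDB) (pd hD hXiP (fun h => niD h.symm)) (pd hD hXjP (fun h => njD h.symm))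
          (hnonD A hA) domAB di dj domCD
      · exact rep_hub hWfin hW3 (pd hA hXiP (fun h => niA h.symm))
          (pd hA hXjP (fun h => njA h.symm)) (pd hXiP hXjP hij)
          (pd hC hA dCA) (pd hC hXiP (fun h => niC h.symm)) (pd hC hXjP (fun h => njC h.symm))
          (pd hD hA dDA) (pd hD hXiP (fun h => niD h.symm)) (pd hD hXjP (fun h => njD h.symm))
          (hnonD B hB) domBA di dj domCD
      · exact rep_hub hWfin hW3 (pd hD hXiP (fun h => niD h.symm))
          (pd hD hXjP (fun h => njD h.symm)) (pd hXiP hXjP hij)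
          (pd hA hD (fun h => dDA h.symm)) (pd hA hXiP (fun h => niA h.symm))
          (pd hA hXjP (fun h => njA h.symm))
          (pd hB hD (fun h => dDB h.symm)) (pd hB hXiP (fun h => niB h.symm))
          (pd hB hXjP (fun h => njB h.symm))
          (hnonD C hC) domCD di dj domAB
      · exact rep_hub hWfin hW3 (pd hC hXiP (fun h => niC h.symm))
          (pd hC hXjP (fun h => njC h.symm)) (pd hXiP hXjP hij)
          (pd hA hC (fun h => dCA h.symm)) (pd hA hXiP (fun h => niA h.symm))
          (pd hA hXjP (fun h => njA h.symm))
          (pd hB hC (fun h => dCB h.symm)) (pd hB hXiP (fun h => niB h.symm))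
          (pd hB hXjP (fun h => njB h.symm))
          (hnonD D hD) domDC di dj domAB
    -- two outside parts using opposite hubs of one pair is impossible
    have L2' : ∀ Xi Xj Yi Yj, Xi ∈ P \ {A, B, C, D} → Xj ∈ P \ {A, B, C, D} → Xi ≠ Xj →
        ADom E W (Xi ∪ Yi) → ADom E W (Xj ∪ Yj) →
        ((Yi = A ∧ Yj = B) ∨ (Yi = B ∧ Yj = A) ∨ (Yi = C ∧ Yj = D) ∨ (Yi = D ∧ Yj = C)) →
        False := by
      intro Xi Xj Yi Yj hXiO hXjO hij di dj hc
      obtain ⟨hXiP, niA, niB, niC, niD⟩ := hOmem hXiO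
      obtain ⟨hXjP, njA, njB, njC, njD⟩ := hOmem hXjO
      rcases hc with ⟨h1, h2⟩ | ⟨h1, h2⟩ | ⟨h1, h2⟩ | ⟨h1, h2⟩ <;> rw [h1] at di <;> rw [h2] at dj
      · exact three_pairs hne hdisj hcup hWfin hW3 hWself h7 hXiP hA hXjP hB hC hD
          niA hij niB niC niD (fun h => njA h.symm) dAB (fun h => dCA h.symm)
          (fun h => dDA h.symm) njB njC njD (fun h => dCB h.symm) (fun h => dDB h.symm) dCD
          di dj domCD
      · exact three_pairs hne hdisj hcup hWfin hW3 hWself h7 hXiP hB hXjP hA hC hD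
          niB hij niA niC niD (fun h => njB h.symm) (fun h => dAB h.symm)
          (fun h => dCB h.symm) (fun h => dDB h.symm) njA njC njD (fun h => dCA h.symm)
          (fun h => dDA h.symm) dCD di dj domCD
      · exact three_pairs hne hdisj hcup hWfin hW3 hWself h7 hXiP hC hXjP hD hA hB
          niC hij niD niA niB (fun h => njC h.symm) dCD dCA dCB njD njA njB dDA dDB dAB
          di dj domAB
      · exact three_pairs hne hdisj hcup hWfin hW3 hWself h7 hXiP hD hXjP hC hA hB
          niD hij niC niA niB (fun h => njD h.symm) (fun h => dCD h.symm) dDA dDB njC njA njB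
          dCA dCB dAB di dj domAB
    obtain ⟨Y1, hY1, dm1⟩ := hY X1 hX1O
    obtain ⟨Y2, hY2, dm2⟩ := hY X2 hX2O
    obtain ⟨Y3, hY3, dm3⟩ := hY X3 hX3O
    by_cases e12 : Y1 = Y2
    · exact L1' X1 X2 Y1 hX1O hX2O n12 dm1 (by rw [e12]; exact dm2) hY1
    by_cases e13 : Y1 = Y3
    · exact L1' X1 X3 Y1 hX1O hX3O n13 dm1 (by rw [e13]; exact dm3) hY1
    by_cases e23 : Y2 = Y3
    · exact L1' X2 X3 Y2 hX2O hX3O n23 dm2 (by rw [e23]; exact dm3) hY2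
    rcases hY1 with h1 | h1 | h1 | h1 <;> rcases hY2 with h2 | h2 | h2 | h2 <;>
      rcases hY3 with h3 | h3 | h3 | h3 <;>
      first
        | exact e12 (h1.trans h2.symm)
        | exact e13 (h1.trans h3.symm)
        | exact e23 (h2.trans h3.symm)
        | exact L2' X1 X2 Y1 Y2 hX1O hX2O n12 dm1 dm2 (Or.inl ⟨h1, h2⟩)
        | exact L2' X1 X2 Y1 Y2 hX1O hX2O n12 dm1 dm2 (Or.inr (Or.inl ⟨h1, h2⟩))
        | exact L2' X1 X2 Y1 Y2 hX1O hX2O n12 dm1 dm2 (Or.inr (Or.inr (Or.inl ⟨h1, h2⟩)))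
        | exact L2' X1 X2 Y1 Y2 hX1O hX2O n12 dm1 dm2 (Or.inr (Or.inr (Or.inr ⟨h1, h2⟩)))
        | exact L2' X1 X3 Y1 Y3 hX1O hX3O n13 dm1 dm3 (Or.inl ⟨h1, h3⟩)
        | exact L2' X1 X3 Y1 Y3 hX1O hX3O n13 dm1 dm3 (Or.inr (Or.inl ⟨h1, h3⟩))
        | exact L2' X1 X3 Y1 Y3 hX1O hX3O n13 dm1 dm3 (Or.inr (Or.inr (Or.inl ⟨h1, h3⟩)))
        | exact L2' X1 X3 Y1 Y3 hX1O hX3O n13 dm1 dm3 (Or.inr (Or.inr (Or.inr ⟨h1, h3⟩)))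
        | exact L2' X2 X3 Y2 Y3 hX2O hX3O n23 dm2 dm3 (Or.inl ⟨h2, h3⟩)
        | exact L2' X2 X3 Y2 Y3 hX2O hX3O n23 dm2 dm3 (Or.inr (Or.inl ⟨h2, h3⟩))
        | exact L2' X2 X3 Y2 Y3 hX2O hX3O n23 dm2 dm3 (Or.inr (Or.inr (Or.inl ⟨h2, h3⟩)))
        | exact L2' X2 X3 Y2 Y3 hX2O hX3O n23 dm2 dm3 (Or.inr (Or.inr (Or.inr ⟨h2, h3⟩)))
  · -- every coalition pair meets {A, B}
    push_neg at hex2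
    have hPsub : P ⊆ {A, B} ∪ ({X | X ∈ P ∧ X ≠ A ∧ ADom E W (A ∪ X)} \ {B})
        ∪ ({X | X ∈ P ∧ X ≠ B ∧ ADom E W (B ∪ X)} \ {A}) := by
      intro X hX
      by_cases hXA : X = A
      · exact Or.inl (Or.inl (Or.inl hXA))
      by_cases hXB : X = B
      · exact Or.inl (Or.inl (Or.inr hXB))
      obtain ⟨Y, hYP, hYX, hdom⟩ := hpart' X hX
      have hY : Y = A ∨ Y = B := by
        by_contra hcon
        push_neg at hcon
        exact hex2 X hX Y hYP (fun h => hYX h.symm) hXA hXB hcon.1 hcon.2 hdom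
      rcases hY with rfl | rfl
      · exact Or.inl (Or.inr ⟨⟨hX, hXA, by rwa [union_comm] at hdom⟩, hXB⟩)
      · exact Or.inr ⟨⟨hX, hXB, by rwa [union_comm] at hdom⟩, hXA⟩
    have hfin1 : {X | X ∈ P ∧ X ≠ A ∧ ADom E W (A ∪ X)}.Finite :=
      hPfin.subset (fun X hX => hX.1)
    have hfin2 : {X | X ∈ P ∧ X ≠ B ∧ ADom E W (B ∪ X)}.Finite :=
      hPfin.subset (fun X hX => hX.1)
    have hc1 : ({X | X ∈ P ∧ X ≠ A ∧ ADom E W (A ∪ X)} \ {B}).ncard ≤ 2 := by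
      have hmemB : B ∈ {X | X ∈ P ∧ X ≠ A ∧ ADom E W (A ∪ X)} := ⟨hB, hBA, domAB⟩
      have := ncard_diff_singleton_of_mem hmemB
      have := partners_card hdisj hWfin hW3 (hnonD A hA)
      omega
    have hc2 : ({X | X ∈ P ∧ X ≠ B ∧ ADom E W (B ∪ X)} \ {A}).ncard ≤ 2 := by
      have hmemA : A ∈ {X | X ∈ P ∧ X ≠ B ∧ ADom E W (B ∪ X)} :=
        ⟨hA, fun h => hBA h.symm, by rwa [union_comm] at domAB⟩
      have := ncard_diff_singleton_of_mem hmemA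
      have := partners_card hdisj hWfin hW3 (hnonD B hB)
      omega
    have hAB2 : ({A, B} : Set (Set α)).ncard ≤ 2 := by
      have := ncard_insert_le A ({B} : Set (Set α))
      have := ncard_singleton (B : Set α)
      omega
    have hfinU : (({A, B} : Set (Set α)) ∪ ({X | X ∈ P ∧ X ≠ A ∧ ADom E W (A ∪ X)} \ {B})
        ∪ ({X | X ∈ P ∧ X ≠ B ∧ ADom E W (B ∪ X)} \ {A})).Finite :=
      (((finite_singleton B).insert A).union (hfin1.subset diff_subset)).union
        (hfin2.subset diff_subset)
    have h1 := ncard_le_ncard hPsub hfinU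
    have h2 := ncard_union_le (({A, B} : Set (Set α)) ∪
      ({X | X ∈ P ∧ X ≠ A ∧ ADom E W (A ∪ X)} \ {B}))
      ({X | X ∈ P ∧ X ≠ B ∧ ADom E W (B ∪ X)} \ {A})
    have h3 := ncard_union_le ({A, B} : Set (Set α))
      ({X | X ∈ P ∧ X ≠ A ∧ ADom E W (A ∪ X)} \ {B})
    omega

end ECAux




lemma sharesEndpoint_self {V : Type*} (f : Sym2 V) : SharesEndpoint f f :=
  ⟨f.out.1, Sym2.out_fst_mem f, Sym2.out_fst_mem f⟩

lemma sharesEndpoint_symm {V : Type*} {f g : Sym2 V} (h : SharesEndpoint f g) :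
    SharesEndpoint g f := by obtain ⟨v, h1, h2⟩ := h; exact ⟨v, h2, h1⟩

lemma cyc_edgeSet {m : ℕ} : (cycleGraph (m + 3)).edgeSet
    = Set.range (fun i : Fin (m + 3) => s(i, i + 1)) := by
  ext g
  induction g with
  | _ u v =>
    constructor
    · intro h
      rw [mem_edgeSet] at h
      rw [cycleGraph_adj (n := m + 1)] at h
      rcases h with h | h
      · have huv : u = v + 1 := by rwa [sub_eq_iff_eq_add'] at h
        exact ⟨v, by show s(v, v + 1) = s(u, v); rw [huv]; exact Sym2.eq_swap⟩
      · have hvu : v = u + 1 := by rwa [sub_eq_iff_eq_add'] at h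
        exact ⟨u, by show s(u, u + 1) = s(u, v); rw [hvu]⟩
    · rintro ⟨i, hi⟩
      have hi' : s(i, i + 1) = s(u, v) := hi
      rw [← hi', mem_edgeSet]
      rw [cycleGraph_adj (n := m + 1)]
      right
      exact add_sub_cancel_left i 1

lemma cyc_inj {m : ℕ} : Function.Injective (fun i : Fin (m + 3) => s(i, i + 1)) := by
  intro i j h
  simp only [Sym2.eq_iff] at h
  rcases h with ⟨h1, _⟩ | ⟨h1, h2⟩
  · exact h1
  · exfalso
    have hj : j = i + 1 := h2.symm
    rw [hj] at h1
    rw [add_assoc] at h1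
    have h0 : (1 : Fin (m + 3)) + 1 = 0 := (left_eq_add.mp h1)
    have h2 : ((1 : Fin (m + 3)) + 1).val = 2 := by
      rw [Fin.val_add_one_of_lt]
      · rw [Fin.val_one]
      · rw [Fin.lt_iff_val_lt_val, Fin.val_one, Fin.val_last]
        omega
    rw [h0, Fin.val_zero] at h2
    exact absurd h2 (by omega)

lemma cyc_ncard {m : ℕ} : (cycleGraph (m + 3)).edgeSet.ncard = m + 3 := by
  rw [cyc_edgeSet, ← Nat.card_coe_set_eq, Nat.card_range_of_injective cyc_inj,
    Nat.card_eq_fintype_card, Fintype.card_fin]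

lemma cyc_window {m : ℕ} {f : Sym2 (Fin (m + 3))} (hf : f ∈ (cycleGraph (m + 3)).edgeSet) :
    {g | g ∈ (cycleGraph (m + 3)).edgeSet ∧ SharesEndpoint f g}.ncard ≤ 3 := by
  rw [cyc_edgeSet] at hf
  obtain ⟨i, rfl⟩ := hf
  have hsub : {g | g ∈ (cycleGraph (m + 3)).edgeSet ∧ SharesEndpoint s(i, i + 1) g} ⊆
      {s(i - 1, i - 1 + 1), s(i, i + 1), s(i + 1, i + 1 + 1)} := by
    rintro g ⟨hg, v, hvf, hvg⟩
    rw [cyc_edgeSet] at hg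
    obtain ⟨j, rfl⟩ := hg
    rw [Sym2.mem_iff] at hvf hvg
    rcases hvf with h' | h' <;> rcases hvg with h | h
    · exact Or.inr (Or.inl (by rw [← h'.symm.trans h]))
    · refine Or.inl ?_
      have hij : i = j + 1 := h'.symm.trans h
      rw [show i - 1 = j by rw [hij, add_sub_cancel_right]]
    · exact Or.inr (Or.inr (by rw [← h'.symm.trans h]; rfl))
    · exact Or.inr (Or.inl (by rw [← add_right_cancel (h'.symm.trans h)]))
  refine le_trans (Set.ncard_le_ncard hsub (Set.toFinite _)) ?_
  refine le_trans (Set.ncard_insert_le _ _) ?_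
  have h1 := Set.ncard_insert_le s(i, i + 1) ({s(i + 1, i + 1 + 1)} : Set (Sym2 (Fin (m + 3))))
  have h2 := Set.ncard_singleton (s(i + 1, i + 1 + 1) : Sym2 (Fin (m + 3)))
  omega

lemma dom_iff {V : Type*} (G : SimpleGraph V) (D : Set (Sym2 V)) (hD : D ⊆ G.edgeSet) :
    IsEdgeDominating G D ↔
      ECAux.ADom G.edgeSet (fun f => {g | g ∈ G.edgeSet ∧ SharesEndpoint f g}) D := by
  constructor
  · rintro ⟨hsub, h⟩ f hf
    by_cases hfD : f ∈ D
    · exact ⟨f, hfD, hf, sharesEndpoint_self f⟩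
    · obtain ⟨g, hgD, hshare⟩ := h f ⟨hf, hfD⟩
      exact ⟨g, hgD, hsub hgD, hshare⟩
  · intro h
    refine ⟨hD, fun e he => ?_⟩
    obtain ⟨g, hgD, hgW⟩ := h e he.1
    exact ⟨g, hgD, hgW.2⟩

/-- For every cycle `C_n` with `n ≥ 3`, `EC(C_n) ≤ 6`. -/
theorem edgeCoalitionNumber_cycleGraph_le (n : ℕ) (hn : 3 ≤ n) :
    edgeCoalitionNumber (SimpleGraph.cycleGraph n) ≤ 6 := by
  obtain ⟨m, rfl⟩ : ∃ m, n = m + 3 := ⟨n - 3, by omega⟩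
  have key : ∀ k ∈ {k | ∃ P, IsECPartition (cycleGraph (m + 3)) P ∧ P.ncard = k}, k ≤ 6 := by
    rintro k ⟨P, ⟨hne, hdisj, hcup, hpart⟩, rfl⟩
    have hEfin : (cycleGraph (m + 3)).edgeSet.Finite := Set.toFinite _
    have hsubE : ∀ A ∈ P, A ⊆ (cycleGraph (m + 3)).edgeSet := by
      intro A hA x hx
      have hx' : x ∈ ⋃₀ P := ⟨A, hA, hx⟩
      rwa [hcup] at hx'
    by_cases hsmall : m + 3 ≤ 6
    · have h1 := ECAux.card_le_of_partition hne hdisj hcup hEfin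
      have h2 := cyc_ncard (m := m)
      omega
    · refine ECAux.abstract_main
        (W := fun f => {g | g ∈ (cycleGraph (m + 3)).edgeSet ∧ SharesEndpoint f g})
        (fun f _ => Set.toFinite _) (fun f hf => cyc_window hf)
        (fun f hf => ⟨hf, sharesEndpoint_self f⟩)
        (fun f hf g hg hfW => ⟨hg, sharesEndpoint_symm hfW.2⟩)
        hne hdisj hcup hEfin (by rw [cyc_ncard]; omega) ?_
      intro A hA
      rcases hpart A hA with ⟨hs, hdom⟩ | ⟨hnd, B, hB, hBA, hco⟩
      · exact Or.inl ⟨hs, (dom_iff _ A (hsubE A hA)).mp hdom⟩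
      · refine Or.inr ⟨fun h => hnd ((dom_iff _ A (hsubE A hA)).mpr h), B, hB, hBA, ?_⟩
        exact (dom_iff _ (A ∪ B)
          (Set.union_subset (hsubE A hA) (hsubE B hB))).mp hco.2.2.2
  rcases Set.eq_empty_or_nonempty
      {k | ∃ P, IsECPartition (cycleGraph (m + 3)) P ∧ P.ncard = k} with h | h
  · unfold edgeCoalitionNumber
    rw [h, csSup_empty]
    exact Nat.zero_le 6
  · exact csSup_le h key
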